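/- Let J be a homogeneous left ideal of the graded Weyl algebra A_n(K). The quotient A_n(K)/J is a strongly generalized Eulerian A_n(K)-module if and only if E_n^a ∈ J for some a > 0, where E_n is the Euler operator. -/

import Mathlib

open FreeAlgebra

inductive WeylGen (n : ℕ) : Type
  | x : Fin n → WeylGen n
  | d : Fin n → WeylGen n

inductive WeylRel (K : Type) [Field K] (n : ℕ) :
    FreeAlgebra K (WeylGen n) → FreeAlgebra K (WeylGen n) → Prop
  | xx (i j : Fin n) : WeylRel K n (ι K (WeylGen.x i) * ι K (WeylGen.x j))
      (ι K (WeylGen.x j) * ι K (WeylGen.x i))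
  | dd (i j : Fin n) : WeylRel K n (ι K (WeylGen.d i) * ι K (WeylGen.d j))
      (ι K (WeylGen.d j) * ι K (WeylGen.d i))
  | dx_ne (i j : Fin n) (h : i ≠ j) : WeylRel K n (ι K (WeylGen.d i) * ι K (WeylGen.x j))
      (ι K (WeylGen.x j) * ι K (WeylGen.d i))
  | dx (i : Fin n) : WeylRel K n (ι K (WeylGen.d i) * ι K (WeylGen.x i))
      (1 + ι K (WeylGen.x i) * ι K (WeylGen.d i))

/-- The `n`-th Weyl algebra `A_n(K)`. -/
abbrev WeylAlgebra (K : Type) [Field K] (n : ℕ) := RingQuot (WeylRel K n)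

variable (K : Type) [Field K] (n : ℕ)

/-- The generator `X i`. -/
noncomputable def Wx (i : Fin n) : WeylAlgebra K n :=
  RingQuot.mkAlgHom K (WeylRel K n) (ι K (WeylGen.x i))

/-- The generator `∂ i`. -/
noncomputable def Wd (i : Fin n) : WeylAlgebra K n :=
  RingQuot.mkAlgHom K (WeylRel K n) (ι K (WeylGen.d i))

/-- The Euler operator `E_n = ∑ X_i ∂_i`. -/
noncomputable def euler : WeylAlgebra K n := ∑ i : Fin n, Wx K n i * Wd K n i

/-- The monomial `X^γ ∂^α`. -/
noncomputable def Wmonomial (γ α : Fin n → ℕ) : WeylAlgebra K n :=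
  (List.ofFn fun i => Wx K n i ^ γ i).prod * (List.ofFn fun i => Wd K n i ^ α i).prod

/-- `g` is a grading making `M` a graded module over the graded Weyl algebra
(`deg X_i = 1`, `deg ∂_i = -1`): `M` is the internal direct sum of the subgroups `g j` and
the generators act with degrees `1` and `-1`. -/
def IsGradedWeylModule (M : Type) [AddCommGroup M] [Module (WeylAlgebra K n) M]
    (g : ℤ → AddSubgroup M) : Prop :=
  DirectSum.IsInternal g ∧
    (∀ (i : Fin n) (j : ℤ), ∀ m ∈ g j, Wx K n i • m ∈ g (j + 1)) ∧
    (∀ (i : Fin n) (j : ℤ), ∀ m ∈ g j, Wd K n i • m ∈ g (j - 1))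

/-- A graded `A_n(K)`-module is strongly generalized Eulerian if there is a single `a > 0`
such that `(E_n - |w|)^a • w = 0` for every homogeneous `w`. -/
def IsStronglyGeneralizedEulerian (M : Type) [AddCommGroup M] [Module (WeylAlgebra K n) M]
    (g : ℤ → AddSubgroup M) : Prop :=
  ∃ a : ℕ, 0 < a ∧ ∀ (j : ℤ), ∀ m ∈ g j,
    ((euler K n - (j : WeylAlgebra K n)) ^ a) • m = 0

/-- A graded `A_n(K)`-module is generalized Eulerian if for every homogeneous `w` there is
some `a > 0` (depending on `w`) with `(E_n - |w|)^a • w = 0`. -/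
def IsGeneralizedEulerian (M : Type) [AddCommGroup M] [Module (WeylAlgebra K n) M]
    (g : ℤ → AddSubgroup M) : Prop :=
  ∀ (j : ℤ), ∀ m ∈ g j, ∃ a : ℕ, 0 < a ∧
    ((euler K n - (j : WeylAlgebra K n)) ^ a) • m = 0

section AuxLemmas

variable {K n}

lemma Wx_mul_Wx (i j : Fin n) : Wx K n i * Wx K n j = Wx K n j * Wx K n i := by
  have h := RingQuot.mkAlgHom_rel K (WeylRel.xx (K := K) i j)
  simp only [map_mul] at h
  simpa only [Wx] using h

lemma Wd_mul_Wd (i j : Fin n) : Wd K n i * Wd K n j = Wd K n j * Wd K n i := by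
  have h := RingQuot.mkAlgHom_rel K (WeylRel.dd (K := K) i j)
  simp only [map_mul] at h
  simpa only [Wd] using h

lemma Wd_mul_Wx_ne {i j : Fin n} (h : i ≠ j) :
    Wd K n i * Wx K n j = Wx K n j * Wd K n i := by
  have h' := RingQuot.mkAlgHom_rel K (WeylRel.dx_ne (K := K) i j h)
  simp only [map_mul] at h'
  simpa only [Wx, Wd] using h'

lemma Wd_mul_Wx (i : Fin n) : Wd K n i * Wx K n i = 1 + Wx K n i * Wd K n i := by
  have h := RingQuot.mkAlgHom_rel K (WeylRel.dx (K := K) i)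
  simp only [map_mul, map_add, map_one] at h
  simpa only [Wx, Wd] using h

lemma euler_mul_x (k : Fin n) :
    euler K n * Wx K n k = Wx K n k * euler K n + Wx K n k := by
  rw [euler, Finset.sum_mul, Finset.mul_sum]
  have key : ∀ i : Fin n, Wx K n i * Wd K n i * Wx K n k
      = Wx K n k * (Wx K n i * Wd K n i) + (if i = k then Wx K n k else 0) := by
    intro i
    rcases eq_or_ne i k with rfl | h
    · rw [if_pos rfl, mul_assoc, Wd_mul_Wx, mul_add, mul_one, add_comm]
    · rw [if_neg h, add_zero, mul_assoc, Wd_mul_Wx_ne h, ← mul_assoc, Wx_mul_Wx, mul_assoc]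
  rw [Finset.sum_congr rfl fun i _ => key i, Finset.sum_add_distrib, Fintype.sum_ite_eq' k]

lemma euler_mul_d (k : Fin n) :
    euler K n * Wd K n k = Wd K n k * euler K n - Wd K n k := by
  rw [euler, Finset.sum_mul, Finset.mul_sum]
  have key : ∀ i : Fin n, Wx K n i * Wd K n i * Wd K n k
      = Wd K n k * (Wx K n i * Wd K n i) - (if i = k then Wd K n k else 0) := by
    intro i
    rcases eq_or_ne i k with rfl | h
    · rw [if_pos rfl]
      have h2 : Wd K n i * (Wx K n i * Wd K n i) = (1 + Wx K n i * Wd K n i) * Wd K n i := by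
        rw [← mul_assoc, Wd_mul_Wx]
      rw [h2, add_mul, one_mul, add_sub_cancel_left, mul_assoc]
    · rw [if_neg h, sub_zero, mul_assoc, Wd_mul_Wd, ← mul_assoc,
        ← Wd_mul_Wx_ne h.symm, mul_assoc]
  rw [Finset.sum_congr rfl fun i _ => key i, Finset.sum_sub_distrib, Fintype.sum_ite_eq' k]

end AuxLemmas

section NegLemmas
variable {K n}
lemma wneg_mul (x y : WeylAlgebra K n) : -x * y = -(x * y) := neg_mul x y
lemma wmul_neg (x y : WeylAlgebra K n) : x * -y = -(x * y) := mul_neg x y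
lemma wsmul_neg (j : ℤ) (x : WeylAlgebra K n) : j • -x = -(j • x) := smul_neg j x
end NegLemmas
/-- Let `𝒜` be the standard grading of the Weyl algebra (`deg X_i = 1`, `deg ∂_i = -1`) and
`J` a homogeneous left ideal of `A_n(K)`. The quotient `A_n(K)/J` is a strongly generalized
Eulerian module if and only if `E_n ^ a ∈ J` for some `a > 0`. -/
theorem quotient_sge_iff_euler_pow_mem [CharZero K]
    (𝒜 : ℤ → AddSubgroup (WeylAlgebra K n)) [DirectSum.Decomposition 𝒜]
    (hone : (1 : WeylAlgebra K n) ∈ 𝒜 0)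
    (hmul : ∀ (i j : ℤ), ∀ a ∈ 𝒜 i, ∀ b ∈ 𝒜 j, a * b ∈ 𝒜 (i + j))
    (hsmul : ∀ (k : K) (i : ℤ), ∀ a ∈ 𝒜 i, k • a ∈ 𝒜 i)
    (hx : ∀ i : Fin n, Wx K n i ∈ 𝒜 1)
    (hd : ∀ i : Fin n, Wd K n i ∈ 𝒜 (-1))
    (J : Submodule (WeylAlgebra K n) (WeylAlgebra K n))
    (hJ : ∀ (i : ℤ), ∀ x ∈ J, ((DirectSum.decompose 𝒜 x i : 𝒜 i) : WeylAlgebra K n) ∈ J) :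
    IsStronglyGeneralizedEulerian K n (WeylAlgebra K n ⧸ J)
        (fun i => (𝒜 i).map J.mkQ.toAddMonoidHom) ↔
      ∃ a : ℕ, 0 < a ∧ euler K n ^ a ∈ J := by

  classical
  have hE0 : euler K n ∈ 𝒜 0 := by
    rw [euler]
    refine AddSubgroup.sum_mem _ fun i _ => ?_
    simpa using hmul 1 (-1) _ (hx i) _ (hd i)
  have hEpow : ∀ a : ℕ, euler K n ^ a ∈ 𝒜 0 := by
    intro a; induction a with
    | zero => simpa using hone
    | succ a ih => simpa [pow_succ] using hmul 0 0 _ ih _ hE0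
  set T : Set (WeylAlgebra K n) :=
    {w | ∃ d : ℤ, w ∈ 𝒜 d ∧ euler K n * w - w * euler K n = d • w} with hTdef
  have hT_mul : ∀ x ∈ T, ∀ y ∈ T, x * y ∈ T := by
    rintro x ⟨d, hxd, hxc⟩ y ⟨e, hye, hyc⟩
    refine ⟨d + e, hmul _ _ _ hxd _ hye, ?_⟩
    have hL : euler K n * (x * y) - x * y * euler K n
        = (euler K n * x - x * euler K n) * y + x * (euler K n * y - y * euler K n) := by
      simp only [sub_mul, mul_sub, mul_assoc]
      abel
    rw [hL, hxc, hyc, smul_mul_assoc, mul_smul_comm, add_zsmul]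
  have hT_neg : ∀ t ∈ T, -t ∈ T := by
    rintro t ⟨d, hdm, hdc⟩
    refine ⟨d, neg_mem hdm, ?_⟩
    have e1 : euler K n * -t = -(euler K n * t) := wmul_neg _ _
    have e2 : -t * euler K n = -(t * euler K n) := wneg_mul _ _
    have e3 : d • (-t) = -(d • t) := wsmul_neg _ _
    rw [e1, e2, e3, ← hdc]
    abel
  have hclosure_mul : ∀ x ∈ AddSubgroup.closure T, ∀ y ∈ AddSubgroup.closure T,
      x * y ∈ AddSubgroup.closure T := by
    intro x hx' y hy'
    refine AddSubgroup.closure_induction₂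
      (fun a b ha hb => AddSubgroup.subset_closure (hT_mul a ha b hb))
      (fun x _ => by rw [zero_mul]; exact zero_mem _)
      (fun x _ => by rw [mul_zero]; exact zero_mem _)
      (fun x y z _ _ _ h1 h2 => by rw [add_mul]; exact add_mem h1 h2)
      (fun y z x _ _ _ h1 h2 => by rw [mul_add]; exact add_mem h1 h2)
      (fun x y _ _ h => by
        have e : -x * y = -(x * y) := wneg_mul x y
        rw [e]; exact neg_mem h)
      (fun x y _ _ h => by
        have e : x * -y = -(x * y) := wmul_neg x y
        rw [e]; exact neg_mem h) hx' hy'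
  have hT_top : ∀ w : WeylAlgebra K n, w ∈ AddSubgroup.closure T := by
    intro w
    obtain ⟨x, rfl⟩ := RingQuot.mkAlgHom_surjective K (WeylRel K n) w
    induction x using FreeAlgebra.induction with
    | grade0 r =>
        refine AddSubgroup.subset_closure ⟨0, ?_, ?_⟩
        · rw [AlgHom.commutes, Algebra.algebraMap_eq_smul_one]
          exact hsmul r 0 _ hone
        · rw [AlgHom.commutes]
          simp [Algebra.commutes]
    | grade1 g =>
        cases g with
        | x i =>
            refine AddSubgroup.subset_closure ⟨1, hx i, ?_⟩
            show euler K n * Wx K n i - Wx K n i * euler K n = (1 : ℤ) • Wx K n i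
            rw [euler_mul_x]; abel
        | d i =>
            refine AddSubgroup.subset_closure ⟨-1, hd i, ?_⟩
            show euler K n * Wd K n i - Wd K n i * euler K n = (-1 : ℤ) • Wd K n i
            rw [euler_mul_d]; abel
    | mul a b ha hb => rw [map_mul]; exact hclosure_mul _ ha _ hb
    | add a b ha hb => rw [map_add]; exact add_mem ha hb
  have hQT : ∀ t ∈ T, ∀ j : ℤ,
      euler K n * ((DirectSum.decompose 𝒜 t j : 𝒜 j) : WeylAlgebra K n)
        - ((DirectSum.decompose 𝒜 t j : 𝒜 j) : WeylAlgebra K n) * euler K n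
        = j • ((DirectSum.decompose 𝒜 t j : 𝒜 j) : WeylAlgebra K n) := by
    rintro t ⟨d, hdm, hdc⟩ j
    rcases eq_or_ne d j with rfl | hne
    · rw [DirectSum.decompose_of_mem_same 𝒜 hdm]; exact hdc
    · rw [DirectSum.decompose_of_mem_ne 𝒜 hdm hne]; simp
  have hQ : ∀ w : WeylAlgebra K n, ∀ j : ℤ,
      euler K n * ((DirectSum.decompose 𝒜 w j : 𝒜 j) : WeylAlgebra K n)
        - ((DirectSum.decompose 𝒜 w j : 𝒜 j) : WeylAlgebra K n) * euler K n
        = j • ((DirectSum.decompose 𝒜 w j : 𝒜 j) : WeylAlgebra K n) := by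
    intro w
    induction hT_top w using AddSubgroup.closure_induction'' with
    | mem t ht => exact hQT t ht
    | neg_mem t ht => exact hQT (-t) (hT_neg t ht)
    | zero => intro j; simp
    | add x y hx' hy' h1 h2 =>
        intro j
        have hc : ((DirectSum.decompose 𝒜 (x + y) j : 𝒜 j) : WeylAlgebra K n)
            = ((DirectSum.decompose 𝒜 x j : 𝒜 j) : WeylAlgebra K n)
              + ((DirectSum.decompose 𝒜 y j : 𝒜 j) : WeylAlgebra K n) := by
          rw [DirectSum.decompose_add]
          simp
        rw [hc, mul_add, add_mul, zsmul_add, ← h1 j, ← h2 j]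
        abel
  have hcomm : ∀ (j : ℤ) (w : WeylAlgebra K n), w ∈ 𝒜 j →
      euler K n * w - w * euler K n = j • w := by
    intro j w hw
    have h := hQ w j
    rwa [DirectSum.decompose_of_mem_same 𝒜 hw] at h
  have hbase : ∀ (j : ℤ) (w : WeylAlgebra K n), w ∈ 𝒜 j →
      (euler K n - (j : WeylAlgebra K n)) * w = w * euler K n := by
    intro j w hw
    have h := hcomm j w hw
    have hz : (j : WeylAlgebra K n) * w = j • w := (zsmul_eq_mul w j).symm
    rw [sub_mul, hz, sub_eq_iff_eq_add]
    exact (eq_add_of_sub_eq h).trans (add_comm _ _)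
  have hpow : ∀ (a : ℕ) (j : ℤ) (w : WeylAlgebra K n), w ∈ 𝒜 j →
      (euler K n - (j : WeylAlgebra K n)) ^ a * w = w * euler K n ^ a := by
    intro a
    induction a with
    | zero => intro j w _; simp
    | succ a ih =>
        intro j w hw
        have hmem : w * euler K n ^ a ∈ 𝒜 j := by
          simpa using hmul j 0 w hw _ (hEpow a)
        rw [pow_succ', mul_assoc, ih j w hw, hbase j _ hmem, mul_assoc, ← pow_succ]
  constructor
  · rintro ⟨a, ha, H⟩
    have h1 : J.mkQ.toAddMonoidHom (1 : WeylAlgebra K n)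
        ∈ (𝒜 0).map J.mkQ.toAddMonoidHom := ⟨1, hone, rfl⟩
    have h2 := H 0 _ h1
    simp only [LinearMap.toAddMonoidHom_coe, Int.cast_zero, sub_zero] at h2
    have h3 : J.mkQ (euler K n ^ a • (1 : WeylAlgebra K n)) = 0 := by
      rw [map_smul]; exact h2
    rw [smul_eq_mul, mul_one, Submodule.mkQ_apply, Submodule.Quotient.mk_eq_zero] at h3
    exact ⟨a, ha, h3⟩
  · rintro ⟨a, ha, hEa⟩
    refine ⟨a, ha, ?_⟩
    rintro j m ⟨w, hw, rfl⟩
    simp only [LinearMap.toAddMonoidHom_coe]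
    have hs : (euler K n - (j : WeylAlgebra K n)) ^ a • J.mkQ w
        = J.mkQ ((euler K n - (j : WeylAlgebra K n)) ^ a * w) := by
      rw [← map_smul, smul_eq_mul]
    rw [hs, hpow a j w hw, Submodule.mkQ_apply, Submodule.Quotient.mk_eq_zero]
    simpa [smul_eq_mul] using J.smul_mem w hEa
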